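/- In the Samelson setup, let I be a subset of the simple roots, let Δ_I ⊆ Δ⁺ be the set of positive roots supported on I, and set 𝔥_I := 𝔥 ⊕ ⨁_{α ∈ Δ_I} (𝔤_α ⊕ 𝔤_{−α}) and 𝔭 := ⨁_{α ∈ Δ⁺ \ Δ_I} (𝔤_α ⊕ 𝔤_{−α}). Then the Bismut torsion satisfies T(X, Y, Z) = 0 for all X, Y ∈ 𝔥_I and Z ∈ 𝔭. (This is the purely algebraic claim behind the Hermitian submersion G → G/H_I of the paper's final corollary.) -/

import Mathlib

/-- The Samelson setup: a finite-dimensional complex semisimple Lie algebra `L` with a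
Cartan subalgebra `H`, root system `Δ` (with values in an additive group `R` of weights),
a choice of positive roots `pos` with simple roots, root spaces, the decomposition into
simple ideals, the left-invariant metric `G` determined by constants `lam i > 0` and
`c α > 0`, a Samelson complex structure `J`, and the Killing form `killingForm ℂ L`. -/
structure SamelsonSetup (R L : Type) [AddCommGroup R] [LieRing L] [LieAlgebra ℂ L] where
  finiteDim : FiniteDimensional ℂ L
  semisimple : LieAlgebra.IsSemisimple ℂ L
  /-- the Cartan subalgebra 𝔥 -/
  H : LieSubalgebra ℂ L
  cartan : H.IsCartanSubalgebra
  /-- the root system Δ ⊆ 𝔥* -/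
  Δ : Set R
  /-- the positive roots Δ⁺ -/
  pos : Set R
  Δ_finite : Δ.Finite
  pos_subset : pos ⊆ Δ
  zero_not_mem : (0 : R) ∉ Δ
  neg_mem : ∀ a ∈ Δ, -a ∈ Δ
  pos_or_neg : ∀ a ∈ Δ, a ∈ pos ∨ -a ∈ pos
  not_pos_and_neg : ∀ a ∈ pos, -a ∉ pos
  /-- the number of simple roots (= rank) -/
  r : ℕ
  /-- the simple roots α₁, …, α_r -/
  simple : Fin r → R
  simple_mem : ∀ j, simple j ∈ pos
  /-- the coefficients of a positive root as an ℕ-linear combination of simple roots -/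
  coeff : R → Fin r → ℕ
  coeff_spec : ∀ a ∈ pos, a = ∑ j, coeff a j • simple j
  coeff_unique : ∀ a ∈ pos, ∀ k : Fin r → ℕ, a = ∑ j, k j • simple j → k = coeff a
  descent : ∀ a ∈ pos, (∀ j, a ≠ simple j) → ∃ j, ∃ b ∈ pos, a = simple j + b
  /-- the root spaces 𝔤_α (with 𝔤₀ = 𝔥) -/
  rootSpace : R → Submodule ℂ L
  rootSpace_zero : rootSpace 0 = H.toSubmodule
  rootSpace_eq_bot : ∀ a : R, a ≠ 0 → a ∉ Δ → rootSpace a = ⊥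
  bracket_mem : ∀ (a b : R), ∀ X ∈ rootSpace a, ∀ Y ∈ rootSpace b, ⁅X, Y⁆ ∈ rootSpace (a + b)
  rootSpace_sup : (⨆ a ∈ insert (0 : R) Δ, rootSpace a) = ⊤
  rootSpace_indep : iSupIndep fun a : ↥(insert (0 : R) Δ) => rootSpace a.1
  /-- the number of simple ideals -/
  s : ℕ
  /-- the simple ideals 𝔤₁, …, 𝔤_s -/
  ideal : Fin s → LieIdeal ℂ L
  ideal_simple : ∀ i, LieAlgebra.IsSimple ℂ (ideal i)
  ideal_sup : (⨆ i, ideal i) = ⊤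
  ideal_indep : iSupIndep ideal
  /-- the simple ideal a root belongs to -/
  idealOf : R → Fin s
  idealOf_neg : ∀ a, idealOf (-a) = idealOf a
  rootSpace_le_ideal : ∀ a ∈ Δ, ∀ X ∈ rootSpace a, X ∈ ideal (idealOf a)
  /-- the positive constants λᵢ -/
  lam : Fin s → ℝ
  lam_pos : ∀ i, 0 < lam i
  /-- the positive constants c_α, with c_{-α} = c_α -/
  c : R → ℝ
  c_pos : ∀ a ∈ Δ, 0 < c a
  c_neg : ∀ a : R, c (-a) = c a
  /-- the metric g -/
  G : LinearMap.BilinForm ℂ L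
  G_symm : ∀ X Y, G X Y = G Y X
  G_H : ∀ i : Fin s, ∀ X Y : L, X ∈ H → X ∈ ideal i → Y ∈ H → Y ∈ ideal i →
    G X Y = -(lam i : ℂ) * killingForm ℂ L X Y
  G_root : ∀ a ∈ Δ, ∀ X ∈ rootSpace a, ∀ Y ∈ rootSpace (-a),
    G X Y = -(lam (idealOf a) : ℂ) * (c a : ℂ) * killingForm ℂ L X Y
  G_roots_ne : ∀ a ∈ Δ, ∀ b ∈ Δ, a + b ≠ 0 →
    ∀ X ∈ rootSpace a, ∀ Y ∈ rootSpace b, G X Y = 0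
  G_H_root : ∀ a ∈ Δ, ∀ X ∈ H, ∀ Y ∈ rootSpace a, G X Y = 0
  G_ideal_ne : ∀ i j : Fin s, i ≠ j → ∀ X ∈ ideal i, ∀ Y ∈ ideal j, G X Y = 0
  /-- the Samelson complex structure J -/
  J : L →ₗ[ℂ] L
  J_H : ∀ X ∈ H, J X ∈ H
  J_J_H : ∀ X ∈ H, J (J X) = -X
  J_pos : ∀ a ∈ pos, ∀ X ∈ rootSpace a, J X = Complex.I • X
  J_neg : ∀ a ∈ pos, ∀ X ∈ rootSpace (-a), J X = -(Complex.I • X)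

namespace SamelsonSetup

variable {R L : Type} [AddCommGroup R] [LieRing L] [LieAlgebra ℂ L]

/-- The Nomizu form of the Bismut connection:
Φ(X,Y,Z) = ½( g([X,Y],Z) + g([Z,X],Y) − g([Y,Z],X)
            − g([JX,JY],Z) − g([JZ,JX],Y) − g([JY,JZ],X) ). -/
noncomputable def Phi (S : SamelsonSetup R L) (X Y Z : L) : ℂ :=
  (1 / 2 : ℂ) * (S.G ⁅X, Y⁆ Z + S.G ⁅Z, X⁆ Y - S.G ⁅Y, Z⁆ X
    - S.G ⁅S.J X, S.J Y⁆ Z - S.G ⁅S.J Z, S.J X⁆ Y - S.G ⁅S.J Y, S.J Z⁆ X)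

/-- The Bismut torsion: T(X,Y,Z) = −g([JX,JY],Z) − g([JY,JZ],X) − g([JZ,JX],Y). -/
noncomputable def T (S : SamelsonSetup R L) (X Y Z : L) : ℂ :=
  -S.G ⁅S.J X, S.J Y⁆ Z - S.G ⁅S.J Y, S.J Z⁆ X - S.G ⁅S.J Z, S.J X⁆ Y

end SamelsonSetup

namespace SamelsonSetup

variable {R L : Type} [AddCommGroup R] [LieRing L] [LieAlgebra ℂ L]

/-- The set Δ_I of positive roots supported on a set `I` of simple roots. -/
def DeltaI (S : SamelsonSetup R L) (I : Set (Fin S.r)) : Set R :=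
  {a | a ∈ S.pos ∧ ∀ j ∉ I, S.coeff a j = 0}

/-- The subalgebra 𝔥_I = 𝔥 ⊕ ⨁_{α ∈ Δ_I} (𝔤_α ⊕ 𝔤_{−α}), as a subspace of 𝔤. -/
def hI (S : SamelsonSetup R L) (I : Set (Fin S.r)) : Submodule ℂ L :=
  S.H.toSubmodule ⊔ ⨆ a ∈ S.DeltaI I, (S.rootSpace a ⊔ S.rootSpace (-a))

/-- The complement 𝔭 = ⨁_{α ∈ Δ⁺ \ Δ_I} (𝔤_α ⊕ 𝔤_{−α}), as a subspace of 𝔤. -/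
def pI (S : SamelsonSetup R L) (I : Set (Fin S.r)) : Submodule ℂ L :=
  ⨆ a ∈ S.pos \ S.DeltaI I, (S.rootSpace a ⊔ S.rootSpace (-a))

end SamelsonSetup
namespace SamelsonSetup

variable {R L : Type} [AddCommGroup R] [LieRing L] [LieAlgebra ℂ L]

section Aux

variable (S : SamelsonSetup R L) (I : Set (Fin S.r))

/-- membership in {0} ∪ Δ_I ∪ (−Δ_I) -/
def Ah (a : R) : Prop := a = 0 ∨ a ∈ S.DeltaI I ∨ -a ∈ S.DeltaI I

/-- membership in ±(Δ⁺ \ Δ_I) -/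
def Bp (a : R) : Prop := a ∈ S.pos \ S.DeltaI I ∨ -a ∈ S.pos \ S.DeltaI I

lemma coeff_add {a b d : R} (ha : a ∈ S.pos) (hb : b ∈ S.pos) (hd : d ∈ S.pos)
    (h : d = a + b) : ∀ j, S.coeff d j = S.coeff a j + S.coeff b j := by
  have hk : (fun j => S.coeff a j + S.coeff b j) = S.coeff d := by
    apply S.coeff_unique d hd
    calc d = a + b := h
      _ = (∑ j, S.coeff a j • S.simple j) + ∑ j, S.coeff b j • S.simple j := by
          rw [← S.coeff_spec a ha, ← S.coeff_spec b hb]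
      _ = ∑ j, (S.coeff a j + S.coeff b j) • S.simple j := by
          rw [← Finset.sum_add_distrib]
          exact Finset.sum_congr rfl fun j _ => (add_smul _ _ _).symm
  intro j
  exact (congrFun hk j).symm

lemma not_neg_add_mem {a b : R} (ha : a ∈ S.pos) (hb : b ∈ S.pos) :
    -(a + b) ∉ S.pos := by
  intro he
  have hk : (fun j => S.coeff a j + (S.coeff (-(a + b)) j + (S.coeff a j + S.coeff b j)))
      = S.coeff a := by
    apply S.coeff_unique a ha
    calc a = a + (-(a + b) + (a + b)) := by abel
      _ = (∑ j, S.coeff a j • S.simple j)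
          + ((∑ j, S.coeff (-(a + b)) j • S.simple j)
          + ((∑ j, S.coeff a j • S.simple j) + ∑ j, S.coeff b j • S.simple j)) := by
          rw [← S.coeff_spec a ha, ← S.coeff_spec b hb, ← S.coeff_spec _ he]
      _ = ∑ j, (S.coeff a j + (S.coeff (-(a + b)) j + (S.coeff a j + S.coeff b j)))
            • S.simple j := by
          rw [← Finset.sum_add_distrib, ← Finset.sum_add_distrib, ← Finset.sum_add_distrib]
          exact Finset.sum_congr rfl fun j _ => by rw [add_smul, add_smul, add_smul]
  have hz : ∀ j, S.coeff a j = 0 := by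
    intro j
    have h := congrFun hk j
    omega
  have ha0 : a = 0 := by
    rw [S.coeff_spec a ha]
    simp [hz]
  exact S.zero_not_mem (ha0 ▸ S.pos_subset ha)

lemma key_hh {a b d : R} (ha : a ∈ S.DeltaI I)
    (hb : b ∈ S.DeltaI I ∨ -b ∈ S.DeltaI I) (hd : d ∈ S.Δ) (hab : d = a + b) :
    d ∈ S.DeltaI I ∨ -d ∈ S.DeltaI I := by
  obtain ⟨hap, has⟩ := ha
  rcases hb with ⟨hbp, hbs⟩ | ⟨hbp, hbs⟩
  · rcases S.pos_or_neg d hd with hdp | hdn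
    · left
      refine ⟨hdp, fun j hj => ?_⟩
      have hc := S.coeff_add hap hbp hdp hab j
      have h1 := has j hj; have h2 := hbs j hj
      omega
    · exfalso; rw [hab] at hdn; exact S.not_neg_add_mem hap hbp hdn
  · rcases S.pos_or_neg d hd with hdp | hdn
    · left
      have hrel : a = d + (-b) := by rw [hab]; abel
      have hc := S.coeff_add hdp hbp hap hrel
      exact ⟨hdp, fun j hj => by have := hc j; have := has j hj; omega⟩
    · right
      have hrel : -b = (-d) + a := by rw [hab]; abel
      have hc := S.coeff_add hdn hap hbp hrel
      exact ⟨hdn, fun j hj => by have := hc j; have := hbs j hj; omega⟩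

lemma key_hI {a b d : R} (ha : S.Ah I a) (hb : S.Ah I b) (hd : d ∈ S.Δ)
    (hab : d = a + b) : S.Ah I d := by
  rcases ha with rfl | ha | ha
  · rcases hb with rfl | hb | hb
    · exfalso
      have h0 : d = 0 := by rw [hab, add_zero]
      rw [h0] at hd; exact S.zero_not_mem hd
    · exact Or.inr (Or.inl (by rwa [hab, zero_add]))
    · exact Or.inr (Or.inr (by rw [hab, zero_add]; exact hb))
  · rcases hb with rfl | hb | hb
    · exact Or.inr (Or.inl (by rwa [hab, add_zero]))
    · exact Or.inr (S.key_hh I ha (Or.inl hb) hd hab)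
    · exact Or.inr (S.key_hh I ha (Or.inr hb) hd hab)
  · rcases hb with rfl | hb | hb
    · exact Or.inr (Or.inr (by rw [hab, add_zero]; exact ha))
    · exact Or.inr (S.key_hh I hb (Or.inr ha) hd (hab.trans (add_comm a b)))
    · have h := S.key_hh I (a := -a) (b := -b) (d := -d) ha (Or.inl hb)
        (S.neg_mem d hd) (by rw [hab]; abel)
      rcases h with h | h
      · exact Or.inr (Or.inr h)
      · exact Or.inr (Or.inl (by rwa [neg_neg] at h))

lemma key_hp' {a b d : R} (ha : a ∈ S.DeltaI I) (hb : S.Bp I b) (hd : d ∈ S.Δ)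
    (hab : d = a + b) : S.Bp I d := by
  obtain ⟨hap, has⟩ := ha
  rcases hb with ⟨hbp, hbs⟩ | ⟨hbp, hbs⟩
  · rcases S.pos_or_neg d hd with hdp | hdn
    · left
      refine ⟨hdp, fun hdI => hbs ⟨hbp, fun j hj => ?_⟩⟩
      have hc := S.coeff_add hap hbp hdp hab j
      have h1 := hdI.2 j hj
      omega
    · exfalso; rw [hab] at hdn; exact S.not_neg_add_mem hap hbp hdn
  · rcases S.pos_or_neg d hd with hdp | hdn
    · exfalso
      have hrel : a = d + (-b) := by rw [hab]; abel
      have hc := S.coeff_add hdp hbp hap hrel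
      exact hbs ⟨hbp, fun j hj => by have := hc j; have := has j hj; omega⟩
    · right
      refine ⟨hdn, fun hdI => hbs ⟨hbp, fun j hj => ?_⟩⟩
      have hrel : -b = a + (-d) := by rw [hab]; abel
      have hc := S.coeff_add hap hdn hbp hrel j
      have h1 := hdI.2 j hj
      have h2 := has j hj
      omega

lemma Bp_neg {a : R} (ha : S.Bp I a) : S.Bp I (-a) := by
  rcases ha with h | h
  · exact Or.inr (by rwa [neg_neg])
  · exact Or.inl h

lemma key_hp {a b d : R} (ha : S.Ah I a) (hb : S.Bp I b) (hd : d ∈ S.Δ)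
    (hab : d = a + b) : S.Bp I d := by
  rcases ha with rfl | ha | ha
  · rw [hab, zero_add]; exact hb
  · exact S.key_hp' I ha hb hd hab
  · have h2 : S.Bp I (-d) :=
      S.key_hp' I ha (S.Bp_neg I hb) (S.neg_mem d hd) (by rw [hab]; abel)
    have := S.Bp_neg I h2
    rwa [neg_neg] at this

lemma ne_zero_hp {a b : R} (ha : S.Ah I a) (hb : S.Bp I b) : a + b ≠ 0 := by
  intro h0
  have hba : b = -a := by
    have := neg_eq_of_add_eq_zero_right h0
    exact this.symm
  rcases ha with rfl | ha | ha
  · rw [hba, neg_zero] at hb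
    rcases hb with h | h
    · exact S.zero_not_mem (S.pos_subset h.1)
    · rw [neg_zero] at h; exact S.zero_not_mem (S.pos_subset h.1)
  · rcases hb with h | h
    · exact S.not_pos_and_neg a ha.1 (hba ▸ h.1)
    · have hnb : -b ∈ S.DeltaI I := by rw [hba, neg_neg]; exact ha
      exact h.2 hnb
  · rcases hb with h | h
    · have hbI : b ∈ S.DeltaI I := by rw [hba]; exact ha
      exact h.2 hbI
    · have : -b = a := by rw [hba, neg_neg]
      rw [this] at h
      exact S.not_pos_and_neg (-a) ha.1 (by rw [neg_neg]; exact h.1)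

lemma mem_Δ_of_Ah {a : R} (ha : a ∈ S.DeltaI I ∨ -a ∈ S.DeltaI I) : a ∈ S.Δ := by
  rcases ha with h | h
  · exact S.pos_subset h.1
  · rw [← neg_neg a]; exact S.neg_mem _ (S.pos_subset h.1)

lemma mem_Δ_of_Bp {a : R} (ha : S.Bp I a) : a ∈ S.Δ := by
  rcases ha with h | h
  · exact S.pos_subset h.1
  · rw [← neg_neg a]; exact S.neg_mem _ (S.pos_subset h.1)

lemma rootSpace_le_hI {a : R} (ha : S.Ah I a) : S.rootSpace a ≤ S.hI I := by
  rcases ha with rfl | ha | ha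
  · rw [S.rootSpace_zero]; exact le_sup_left
  · exact le_sup_of_le_right (le_trans le_sup_left
      (le_iSup₂ (f := fun a _ => S.rootSpace a ⊔ S.rootSpace (-a)) a ha))
  · refine le_sup_of_le_right (le_trans ?_
      (le_iSup₂ (f := fun a _ => S.rootSpace a ⊔ S.rootSpace (-a)) (-a) ha))
    have h : S.rootSpace a ≤ S.rootSpace (-a) ⊔ S.rootSpace (-(-a)) := by
      rw [neg_neg]; exact le_sup_right
    exact h

lemma rootSpace_le_pI {a : R} (ha : S.Bp I a) : S.rootSpace a ≤ S.pI I := by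
  rcases ha with ha | ha
  · exact le_trans le_sup_left
      (le_iSup₂ (f := fun a _ => S.rootSpace a ⊔ S.rootSpace (-a)) a ha)
  · refine le_trans ?_
      (le_iSup₂ (f := fun a _ => S.rootSpace a ⊔ S.rootSpace (-a)) (-a) ha)
    have h : S.rootSpace a ≤ S.rootSpace (-a) ⊔ S.rootSpace (-(-a)) := by
      rw [neg_neg]; exact le_sup_right
    exact h

lemma rootSpace_add_le_hI {a b : R} (ha : S.Ah I a) (hb : S.Ah I b) :
    S.rootSpace (a + b) ≤ S.hI I := by
  by_cases h0 : a + b = 0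
  · rw [h0, S.rootSpace_zero]; exact le_sup_left
  by_cases hΔ : a + b ∈ S.Δ
  · exact S.rootSpace_le_hI I (S.key_hI I ha hb hΔ rfl)
  · rw [S.rootSpace_eq_bot _ h0 hΔ]; exact bot_le

lemma rootSpace_add_le_pI {a b : R} (ha : S.Ah I a) (hb : S.Bp I b) :
    S.rootSpace (a + b) ≤ S.pI I := by
  by_cases hΔ : a + b ∈ S.Δ
  · exact S.rootSpace_le_pI I (S.key_hp I ha hb hΔ rfl)
  · rw [S.rootSpace_eq_bot _ (S.ne_zero_hp I ha hb) hΔ]; exact bot_le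

lemma hI_le {M : Submodule ℂ L} (h : ∀ a, S.Ah I a → S.rootSpace a ≤ M) :
    S.hI I ≤ M := by
  refine sup_le ?_ (iSup₂_le fun a ha => sup_le ?_ ?_)
  · rw [← S.rootSpace_zero]; exact h 0 (Or.inl rfl)
  · exact h a (Or.inr (Or.inl ha))
  · exact h (-a) (Or.inr (Or.inr (by rwa [neg_neg])))

lemma pI_le {M : Submodule ℂ L} (h : ∀ a, S.Bp I a → S.rootSpace a ≤ M) :
    S.pI I ≤ M :=
  iSup₂_le fun a ha => sup_le (h a (Or.inl ha)) (h (-a) (Or.inr (by rwa [neg_neg])))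

lemma J_mem_hI {X : L} (hX : X ∈ S.hI I) : S.J X ∈ S.hI I := by
  refine S.hI_le I (M := Submodule.comap S.J (S.hI I)) ?_ hX
  intro a ha X' hX'
  simp only [Submodule.mem_comap]
  rcases ha with rfl | ha | ha
  · rw [S.rootSpace_zero] at hX'
    exact (le_sup_left : S.H.toSubmodule ≤ S.hI I) (S.J_H X' hX')
  · rw [S.J_pos a ha.1 X' hX']
    exact S.rootSpace_le_hI I (Or.inr (Or.inl ha)) (Submodule.smul_mem _ _ hX')
  · rw [S.J_neg (-a) ha.1 X' (by rwa [neg_neg])]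
    exact S.rootSpace_le_hI I (Or.inr (Or.inr ha))
      (Submodule.neg_mem _ (Submodule.smul_mem _ _ hX'))

lemma J_mem_pI {X : L} (hX : X ∈ S.pI I) : S.J X ∈ S.pI I := by
  refine S.pI_le I (M := Submodule.comap S.J (S.pI I)) ?_ hX
  intro a ha X' hX'
  simp only [Submodule.mem_comap]
  rcases ha with ha | ha
  · rw [S.J_pos a ha.1 X' hX']
    exact S.rootSpace_le_pI I (Or.inl ha) (Submodule.smul_mem _ _ hX')
  · rw [S.J_neg (-a) ha.1 X' (by rwa [neg_neg])]
    exact S.rootSpace_le_pI I (Or.inr ha)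
      (Submodule.neg_mem _ (Submodule.smul_mem _ _ hX'))

lemma bracket_root_hI {a : R} (ha : S.Ah I a) {X Y : L} (hX : X ∈ S.rootSpace a)
    (hY : Y ∈ S.hI I) : ⁅X, Y⁆ ∈ S.hI I := by
  refine S.hI_le I (M := Submodule.comap (LieAlgebra.ad ℂ L X) (S.hI I)) ?_ hY
  intro b hb Y' hY'
  simp only [Submodule.mem_comap, LieAlgebra.ad_apply]
  exact S.rootSpace_add_le_hI I ha hb (S.bracket_mem a b X hX Y' hY')

lemma bracket_hI_hI {X Y : L} (hX : X ∈ S.hI I) (hY : Y ∈ S.hI I) :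
    ⁅X, Y⁆ ∈ S.hI I := by
  have h : X ∈ Submodule.comap (-(LieAlgebra.ad ℂ L Y)) (S.hI I) := by
    refine S.hI_le I ?_ hX
    intro a ha X' hX'
    simp only [Submodule.mem_comap, LinearMap.neg_apply, LieAlgebra.ad_apply, lie_skew]
    exact S.bracket_root_hI I ha hX' hY
  simp only [Submodule.mem_comap, LinearMap.neg_apply, LieAlgebra.ad_apply, lie_skew] at h
  exact h

lemma bracket_root_pI {a : R} (ha : S.Ah I a) {X Z : L} (hX : X ∈ S.rootSpace a)
    (hZ : Z ∈ S.pI I) : ⁅X, Z⁆ ∈ S.pI I := by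
  refine S.pI_le I (M := Submodule.comap (LieAlgebra.ad ℂ L X) (S.pI I)) ?_ hZ
  intro b hb Z' hZ'
  simp only [Submodule.mem_comap, LieAlgebra.ad_apply]
  exact S.rootSpace_add_le_pI I ha hb (S.bracket_mem a b X hX Z' hZ')

lemma bracket_hI_pI {X Z : L} (hX : X ∈ S.hI I) (hZ : Z ∈ S.pI I) :
    ⁅X, Z⁆ ∈ S.pI I := by
  have h : X ∈ Submodule.comap (-(LieAlgebra.ad ℂ L Z)) (S.pI I) := by
    refine S.hI_le I ?_ hX
    intro a ha X' hX'
    simp only [Submodule.mem_comap, LinearMap.neg_apply, LieAlgebra.ad_apply, lie_skew]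
    exact S.bracket_root_pI I ha hX' hZ
  simp only [Submodule.mem_comap, LinearMap.neg_apply, LieAlgebra.ad_apply, lie_skew] at h
  exact h

lemma G_root_hI {b : R} (hb : S.Bp I b) {Z : L} (hZ : Z ∈ S.rootSpace b) {X : L}
    (hX : X ∈ S.hI I) : S.G X Z = 0 := by
  have h : X ∈ LinearMap.ker (S.G.flip Z) := by
    refine S.hI_le I ?_ hX
    intro a ha X' hX'
    simp only [LinearMap.mem_ker, LinearMap.flip_apply]
    rcases ha with rfl | ha | ha
    · rw [S.rootSpace_zero] at hX'
      exact S.G_H_root b (S.mem_Δ_of_Bp I hb) X' hX' Z hZ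
    · exact S.G_roots_ne a (S.mem_Δ_of_Ah I (Or.inl ha)) b (S.mem_Δ_of_Bp I hb)
        (S.ne_zero_hp I (Or.inr (Or.inl ha)) hb) X' hX' Z hZ
    · exact S.G_roots_ne a (S.mem_Δ_of_Ah I (Or.inr ha)) b (S.mem_Δ_of_Bp I hb)
        (S.ne_zero_hp I (Or.inr (Or.inr ha)) hb) X' hX' Z hZ
  simpa using h

lemma G_hI_pI {X Z : L} (hX : X ∈ S.hI I) (hZ : Z ∈ S.pI I) : S.G X Z = 0 := by
  have h : Z ∈ LinearMap.ker (S.G X) := by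
    refine S.pI_le I ?_ hZ
    intro b hb Z' hZ'
    exact LinearMap.mem_ker.mpr (S.G_root_hI I hb hZ' hX)
  simpa using h

end Aux

end SamelsonSetup

theorem bismut_torsion_vanishes_hI_hI_p' {R L : Type} [AddCommGroup R] [LieRing L]
    [LieAlgebra ℂ L] (S : SamelsonSetup R L) (I : Set (Fin S.r))
    (X Y Z : L) (hX : X ∈ S.hI I) (hY : Y ∈ S.hI I) (hZ : Z ∈ S.pI I) :
    S.T X Y Z = 0 := by
  have hJX := S.J_mem_hI I hX
  have hJY := S.J_mem_hI I hY
  have hJZ := S.J_mem_pI I hZ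
  have h1 : S.G ⁅S.J X, S.J Y⁆ Z = 0 :=
    S.G_hI_pI I (S.bracket_hI_hI I hJX hJY) hZ
  have h2 : S.G ⁅S.J Y, S.J Z⁆ X = 0 := by
    rw [S.G_symm]
    exact S.G_hI_pI I hX (S.bracket_hI_pI I hJY hJZ)
  have h3 : S.G ⁅S.J Z, S.J X⁆ Y = 0 := by
    rw [S.G_symm, ← lie_skew, map_neg, S.G_hI_pI I hY (S.bracket_hI_pI I hJX hJZ), neg_zero]
  simp [SamelsonSetup.T, h1, h2, h3]

/-- For any subset I of the simple roots, the Bismut torsion satisfies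
T(X, Y, Z) = 0 for all X, Y ∈ 𝔥_I and Z ∈ 𝔭. -/
theorem bismut_torsion_vanishes_hI_hI_p {R L : Type} [AddCommGroup R] [LieRing L]
    [LieAlgebra ℂ L] (S : SamelsonSetup R L) (I : Set (Fin S.r))
    (X Y Z : L) (hX : X ∈ S.hI I) (hY : Y ∈ S.hI I) (hZ : Z ∈ S.pI I) :
    S.T X Y Z = 0 :=
  bismut_torsion_vanishes_hI_hI_p' S I X Y Z hX hY hZ
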